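/- In the same intercept-only crossed random effects model, U_E = N ∑_{ij} Z_{ij}(Y_{ij} − N⁻¹∑_{i'j'}Z_{i'j'}Y_{i'j'})² has expectation E(U_E) = σ_A²(N² − ∑_i N_{i·}²) + σ_B²(N² − ∑_j N_{·j}²) + σ_E²(N² − N). -/

import Mathlib

open MeasureTheory ProbabilityTheory
open scoped ENNReal

section Aux

variable {Ω : Type*} [MeasurableSpace Ω] {μ : Measure Ω}

lemma aux_int_mul {f g : Ω → ℝ} (hf : MemLp f 2 μ) (hg : MemLp g 2 μ) :
    Integrable (fun ω => f ω * g ω) μ := by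
  have hpqr : (1 : ℝ≥0∞) / 1 = 1 / 2 + 1 / 2 := by
    rw [ENNReal.div_add_div_same, one_div]
    norm_num
    rw [ENNReal.div_self] <;> norm_num
  have h := hg.smul hf (r := 1)
  rw [memLp_one_iff_integrable] at h
  exact h

lemma aux_sum_mul_int {ι κ : Type*} [Fintype ι] [Fintype κ]
    (x : ι → Ω → ℝ) (y : κ → Ω → ℝ)
    (hx : ∀ k, MemLp (x k) 2 μ) (hy : ∀ l, MemLp (y l) 2 μ) :
    ∫ ω, (∑ k, x k ω) * (∑ l, y l ω) ∂μ = ∑ k, ∑ l, ∫ ω, x k ω * y l ω ∂μ := by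
  have h1 : ∀ ω, (∑ k, x k ω) * (∑ l, y l ω) = ∑ k, ∑ l, x k ω * y l ω := by
    intro ω; rw [Finset.sum_mul_sum]
  simp_rw [h1]
  rw [integral_finset_sum _ fun k _ =>
    integrable_finset_sum _ fun l _ => aux_int_mul (hx k) (hy l)]
  exact Finset.sum_congr rfl fun k _ =>
    integral_finset_sum _ fun l _ => aux_int_mul (hx k) (hy l)

end Aux

theorem stmt_18 {Ω : Type*} [MeasurableSpace Ω] (μ : Measure Ω) [IsProbabilityMeasure μ]
    (R C : ℕ) (m σA2 σB2 σE2 : ℝ)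
    (a : Fin R → Ω → ℝ) (b : Fin C → Ω → ℝ) (e : Fin R → Fin C → Ω → ℝ)
    (hind : iIndepFun (m := fun _ : (Fin R ⊕ Fin C ⊕ Fin R × Fin C) => inferInstance)
      (Sum.elim a (Sum.elim b (fun p => e p.1 p.2))) μ)
    (ha2 : ∀ i, MemLp (a i) 2 μ) (hb2 : ∀ j, MemLp (b j) 2 μ)
    (he2 : ∀ i j, MemLp (e i j) 2 μ)
    (ham : ∀ i, ∫ ω, a i ω ∂μ = 0) (hbm : ∀ j, ∫ ω, b j ω ∂μ = 0)
    (hem : ∀ i j, ∫ ω, e i j ω ∂μ = 0)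
    (hav : ∀ i, ∫ ω, (a i ω) ^ 2 ∂μ = σA2) (hbv : ∀ j, ∫ ω, (b j ω) ^ 2 ∂μ = σB2)
    (hev : ∀ i j, ∫ ω, (e i j ω) ^ 2 ∂μ = σE2)
    (Z : Matrix (Fin R) (Fin C) ℝ) (hZ01 : ∀ i j, Z i j = 0 ∨ Z i j = 1)
    (Ni : Fin R → ℝ) (hNi : Ni = fun i => ∑ j, Z i j) (hNipos : ∀ i, 0 < Ni i)
    (N : ℝ) (hN : N = ∑ i, ∑ j, Z i j)
    (Nj : Fin C → ℝ) (hNj : Nj = fun j => ∑ i, Z i j)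
    (Y : Fin R → Fin C → Ω → ℝ)
    (hY : Y = fun i j ω => m + a i ω + b j ω + e i j ω)
    (UE : Ω → ℝ)
    (hUE : UE = fun ω => N * ∑ i, ∑ j, Z i j *
      (Y i j ω - N⁻¹ * ∑ i', ∑ j', Z i' j' * Y i' j' ω) ^ 2) :
    ∫ ω, UE ω ∂μ = σA2 * (N ^ 2 - ∑ i, (Ni i) ^ 2) + σB2 * (N ^ 2 - ∑ j, (Nj j) ^ 2)
      + σE2 * (N ^ 2 - N) := by
  classical
  rcases Nat.eq_zero_or_pos R with hR | hR
  · subst hR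
    have hN0 : N = 0 := by simp [hN]
    subst hNj
    simp [hUE, hN0]
  -- main case
  have hNipos' : ∀ i, 0 < ∑ j, Z i j := by
    intro i; have := hNipos i; rwa [hNi] at this
  have hNpos : 0 < N := by
    rw [hN]
    exact Finset.sum_pos (fun i _ => hNipos' i)
      (Finset.univ_nonempty_iff.mpr (Fin.pos_iff_nonempty.mp hR))
  have hNne : N ≠ 0 := ne_of_gt hNpos
  -- pointwise description of Y
  have hYapp : ∀ i j ω, Y i j ω = m + a i ω + b j ω + e i j ω := by
    intro i j ω; rw [hY]
  have hYmem : ∀ i j, MemLp (Y i j) 2 μ := by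
    intro i j
    have : Y i j = (fun _ => m) + a i + b j + e i j := by
      funext ω; simp [hYapp, Pi.add_apply]
    rw [this]
    exact (((memLp_const m).add (ha2 i)).add (hb2 j)).add (he2 i j)
  -- independence helpers
  have hzero : ∀ (X W : Ω → ℝ), IndepFun X W μ → MemLp X 2 μ → MemLp W 2 μ →
      (∫ ω, W ω ∂μ) = 0 → ∫ ω, X ω * W ω ∂μ = 0 := by
    intro X W h hX hW hWm
    have hi := h.integral_mul_eq_mul_integral hX.aestronglyMeasurable hW.aestronglyMeasurable
    have : ∫ ω, X ω * W ω ∂μ = ∫ ω, (X * W) ω ∂μ := rfl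
    rw [this, hi, hWm, mul_zero]
  have haa : ∀ i i', i ≠ i' → IndepFun (a i) (a i') μ := fun i i' h =>
    hind.indepFun (show (Sum.inl i : Fin R ⊕ Fin C ⊕ Fin R × Fin C) ≠ Sum.inl i' by
      simp [h])
  have hab : ∀ i j, IndepFun (a i) (b j) μ := fun i j =>
    hind.indepFun (show (Sum.inl i : Fin R ⊕ Fin C ⊕ Fin R × Fin C) ≠ Sum.inr (Sum.inl j) by
      simp)
  have hae : ∀ i i' j', IndepFun (a i) (e i' j') μ := fun i i' j' =>
    hind.indepFun (show (Sum.inl i : Fin R ⊕ Fin C ⊕ Fin R × Fin C)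
      ≠ Sum.inr (Sum.inr (i', j')) by simp)
  have hbb : ∀ j j', j ≠ j' → IndepFun (b j) (b j') μ := fun j j' h =>
    hind.indepFun (show (Sum.inr (Sum.inl j) : Fin R ⊕ Fin C ⊕ Fin R × Fin C)
      ≠ Sum.inr (Sum.inl j') by simp [h])
  have hbe : ∀ j i' j', IndepFun (b j) (e i' j') μ := fun j i' j' =>
    hind.indepFun (show (Sum.inr (Sum.inl j) : Fin R ⊕ Fin C ⊕ Fin R × Fin C)
      ≠ Sum.inr (Sum.inr (i', j')) by simp)
  have hee : ∀ i j i' j', (i, j) ≠ (i', j') → IndepFun (e i j) (e i' j') μ := fun i j i' j' h =>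
    hind.indepFun (show (Sum.inr (Sum.inr (i, j)) : Fin R ⊕ Fin C ⊕ Fin R × Fin C)
      ≠ Sum.inr (Sum.inr (i', j')) by simp [h])
  -- covariance of Y entries
  have hcov : ∀ i j i' j', ∫ ω, Y i j ω * Y i' j' ω ∂μ =
      m ^ 2 + (if i = i' then σA2 else 0) + (if j = j' then σB2 else 0)
        + (if i = i' ∧ j = j' then σE2 else 0) := by
    intro i j i' j'
    have hx : ∀ k, MemLp ((![fun _ => m, a i, b j, e i j] : Fin 4 → Ω → ℝ) k) 2 μ := by
      intro k
      fin_cases k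
      · exact memLp_const m
      · exact ha2 i
      · exact hb2 j
      · exact he2 i j
    have hy : ∀ k, MemLp ((![fun _ => m, a i', b j', e i' j'] : Fin 4 → Ω → ℝ) k) 2 μ := by
      intro k
      fin_cases k
      · exact memLp_const m
      · exact ha2 i'
      · exact hb2 j'
      · exact he2 i' j'
    have h1 : ∀ ω, Y i j ω * Y i' j' ω =
        (∑ k, (![fun _ => m, a i, b j, e i j] : Fin 4 → Ω → ℝ) k ω) *
        (∑ l, (![fun _ => m, a i', b j', e i' j'] : Fin 4 → Ω → ℝ) l ω) := by
      intro ω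
      simp [Fin.sum_univ_four, hYapp]
    calc ∫ ω, Y i j ω * Y i' j' ω ∂μ
        = ∫ ω, (∑ k, (![fun _ => m, a i, b j, e i j] : Fin 4 → Ω → ℝ) k ω) *
            (∑ l, (![fun _ => m, a i', b j', e i' j'] : Fin 4 → Ω → ℝ) l ω) ∂μ := by
          simp_rw [h1]
      _ = ∑ k, ∑ l, ∫ ω, (![fun _ => m, a i, b j, e i j] : Fin 4 → Ω → ℝ) k ω *
            (![fun _ => m, a i', b j', e i' j'] : Fin 4 → Ω → ℝ) l ω ∂μ :=
          aux_sum_mul_int _ _ hx hy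
      _ = m ^ 2 + (if i = i' then σA2 else 0) + (if j = j' then σB2 else 0)
            + (if i = i' ∧ j = j' then σE2 else 0) := by
          simp only [Fin.sum_univ_four, Matrix.cons_val_zero, Matrix.cons_val_one,
            Matrix.head_cons, Matrix.cons_val_two, Matrix.tail_cons, Matrix.cons_val_three]
          have t00 : ∫ (_ : Ω), m * m ∂μ = m ^ 2 := by simp [sq]
          have t01 : ∫ ω, m * a i' ω ∂μ = 0 := by rw [integral_const_mul, ham, mul_zero]
          have t02 : ∫ ω, m * b j' ω ∂μ = 0 := by rw [integral_const_mul, hbm, mul_zero]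
          have t03 : ∫ ω, m * e i' j' ω ∂μ = 0 := by rw [integral_const_mul, hem, mul_zero]
          have t10 : ∫ ω, a i ω * m ∂μ = 0 := by rw [integral_mul_const, ham, zero_mul]
          have t20 : ∫ ω, b j ω * m ∂μ = 0 := by rw [integral_mul_const, hbm, zero_mul]
          have t30 : ∫ ω, e i j ω * m ∂μ = 0 := by rw [integral_mul_const, hem, zero_mul]
          have t11 : ∫ ω, a i ω * a i' ω ∂μ = if i = i' then σA2 else 0 := by
            by_cases h : i = i'
            · subst h; simp only [if_pos rfl]; simp_rw [← sq]; exact hav i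
            · rw [if_neg h]; exact hzero _ _ (haa i i' h) (ha2 i) (ha2 i') (ham i')
          have t12 : ∫ ω, a i ω * b j' ω ∂μ = 0 :=
            hzero _ _ (hab i j') (ha2 i) (hb2 j') (hbm j')
          have t13 : ∫ ω, a i ω * e i' j' ω ∂μ = 0 :=
            hzero _ _ (hae i i' j') (ha2 i) (he2 i' j') (hem i' j')
          have t21 : ∫ ω, b j ω * a i' ω ∂μ = 0 :=
            hzero _ _ (hab i' j).symm (hb2 j) (ha2 i') (ham i')
          have t22 : ∫ ω, b j ω * b j' ω ∂μ = if j = j' then σB2 else 0 := by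
            by_cases h : j = j'
            · subst h; simp only [if_pos rfl]; simp_rw [← sq]; exact hbv j
            · rw [if_neg h]; exact hzero _ _ (hbb j j' h) (hb2 j) (hb2 j') (hbm j')
          have t23 : ∫ ω, b j ω * e i' j' ω ∂μ = 0 :=
            hzero _ _ (hbe j i' j') (hb2 j) (he2 i' j') (hem i' j')
          have t31 : ∫ ω, e i j ω * a i' ω ∂μ = 0 :=
            hzero _ _ (hae i' i j).symm (he2 i j) (ha2 i') (ham i')
          have t32 : ∫ ω, e i j ω * b j' ω ∂μ = 0 :=
            hzero _ _ (hbe j' i j).symm (he2 i j) (hb2 j') (hbm j')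
          have t33 : ∫ ω, e i j ω * e i' j' ω ∂μ = if i = i' ∧ j = j' then σE2 else 0 := by
            by_cases h : i = i' ∧ j = j'
            · obtain ⟨h1', h2'⟩ := h; subst h1'; subst h2'
              rw [if_pos (show i = i ∧ j = j from ⟨rfl, rfl⟩)]
              simp_rw [← sq]; exact hev i j
            · rw [if_neg h]
              refine hzero _ _ (hee i j i' j' ?_) (he2 i j) (he2 i' j') (hem i' j')
              simp only [Ne, Prod.mk.injEq]; tauto
          rw [t00, t01, t02, t03, t10, t11, t12, t13, t20, t21, t22, t23, t30, t31, t32, t33]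
          ring
  -- second moment of each Y entry
  have hY2v : ∀ i j, ∫ ω, (Y i j ω) ^ 2 ∂μ = m ^ 2 + σA2 + σB2 + σE2 := by
    intro i j
    have h := hcov i j i j
    simp only [eq_self_iff_true, and_self, if_true] at h
    have h2 : ∫ ω, (Y i j ω) ^ 2 ∂μ = ∫ ω, Y i j ω * Y i j ω ∂μ := by simp_rw [pow_two]
    rw [h2]
    exact h
  -- abbreviations
  set S : Ω → ℝ := fun ω => ∑ i, ∑ j, Z i j * Y i j ω with hS
  set A : Ω → ℝ := fun ω => ∑ i, ∑ j, Z i j * (Y i j ω) ^ 2 with hA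
  have hSalt : ∀ ω, S ω = ∑ p : Fin R × Fin C, Z p.1 p.2 * Y p.1 p.2 ω := by
    intro ω
    rw [Fintype.sum_prod_type]
  have hUE2 : ∀ ω, UE ω = N * A ω - S ω ^ 2 := by
    intro ω
    rw [hUE]
    simp only
    have expand : ∀ i j, Z i j * (Y i j ω - N⁻¹ * S ω) ^ 2
        = Z i j * (Y i j ω) ^ 2 - (2 * N⁻¹ * S ω) * (Z i j * Y i j ω)
          + (N⁻¹ ^ 2 * S ω ^ 2) * Z i j := by
      intro i j; ring
    have key : (∑ i, ∑ j, Z i j * (Y i j ω - N⁻¹ * ∑ i', ∑ j', Z i' j' * Y i' j' ω) ^ 2)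
        = A ω - (2 * N⁻¹ * S ω) * S ω + (N⁻¹ ^ 2 * S ω ^ 2) * N := by
      calc (∑ i, ∑ j, Z i j * (Y i j ω - N⁻¹ * ∑ i', ∑ j', Z i' j' * Y i' j' ω) ^ 2)
          = ∑ i, ∑ j, (Z i j * (Y i j ω) ^ 2 - (2 * N⁻¹ * S ω) * (Z i j * Y i j ω)
            + (N⁻¹ ^ 2 * S ω ^ 2) * Z i j) := by
            refine Finset.sum_congr rfl fun i _ => Finset.sum_congr rfl fun j _ => ?_
            rw [← expand i j]
        _ = A ω - (2 * N⁻¹ * S ω) * S ω + (N⁻¹ ^ 2 * S ω ^ 2) * N := by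
            simp only [Finset.sum_add_distrib, Finset.sum_sub_distrib, ← Finset.mul_sum]
            rw [hA, hS, hN]
    rw [key]
    field_simp
    ring
  -- integrability
  have hZYmem : ∀ (p : Fin R × Fin C), MemLp (fun ω => Z p.1 p.2 * Y p.1 p.2 ω) 2 μ := by
    intro p
    exact (hYmem p.1 p.2).const_mul (Z p.1 p.2)
  have hSmem : MemLp S 2 μ := by
    have h := memLp_finset_sum (μ := μ) (f := fun (p : Fin R × Fin C) ω => Z p.1 p.2 * Y p.1 p.2 ω)
      Finset.univ (fun p _ => hZYmem p)
    have heq : S = fun ω => ∑ p : Fin R × Fin C, Z p.1 p.2 * Y p.1 p.2 ω := funext hSalt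
    rw [heq]
    exact h
  have hIntZY2 : ∀ i j, Integrable (fun ω => Z i j * Y i j ω ^ 2) μ := by
    intro i j
    have := (aux_int_mul (hYmem i j) (hYmem i j)).const_mul (Z i j)
    simp_rw [← pow_two] at this
    exact this
  have hIntA : Integrable A μ := by
    rw [hA]
    exact integrable_finset_sum _ fun i _ => integrable_finset_sum _ fun j _ => hIntZY2 i j
  have hIntS2 : Integrable (fun ω => S ω ^ 2) μ := by
    have := aux_int_mul hSmem hSmem
    simp_rw [← pow_two] at this
    exact this
  -- compute ∫ A
  have hIA : ∫ ω, A ω ∂μ = N * (m ^ 2 + σA2 + σB2 + σE2) := by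
    rw [hA]
    rw [integral_finset_sum _ fun i _ => integrable_finset_sum _ fun j _ => hIntZY2 i j]
    have h1 : ∀ i : Fin R, ∫ ω, (∑ j, Z i j * Y i j ω ^ 2) ∂μ
        = ∑ j, Z i j * (m ^ 2 + σA2 + σB2 + σE2) := by
      intro i
      rw [integral_finset_sum _ fun j _ => hIntZY2 i j]
      exact Finset.sum_congr rfl fun j _ => by rw [integral_const_mul, hY2v]
    simp_rw [h1, ← Finset.sum_mul]
    rw [← hN]
  -- compute ∫ S²
  have hIS2 : ∫ ω, S ω ^ 2 ∂μ =
      m ^ 2 * N ^ 2 + σA2 * (∑ i, Ni i ^ 2) + σB2 * (∑ j, Nj j ^ 2) + σE2 * N := by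
    have step1 : ∫ ω, S ω ^ 2 ∂μ = ∑ p : Fin R × Fin C, ∑ q : Fin R × Fin C,
        ∫ ω, (Z p.1 p.2 * Y p.1 p.2 ω) * (Z q.1 q.2 * Y q.1 q.2 ω) ∂μ := by
      simp_rw [pow_two, hSalt]
      exact aux_sum_mul_int _ _ hZYmem hZYmem
    have step2 : ∀ (p q : Fin R × Fin C),
        ∫ ω, (Z p.1 p.2 * Y p.1 p.2 ω) * (Z q.1 q.2 * Y q.1 q.2 ω) ∂μ
        = Z p.1 p.2 * Z q.1 q.2 * (m ^ 2 + (if p.1 = q.1 then σA2 else 0)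
          + (if p.2 = q.2 then σB2 else 0) + (if p.1 = q.1 ∧ p.2 = q.2 then σE2 else 0)) := by
      intro p q
      have h : ∀ ω, (Z p.1 p.2 * Y p.1 p.2 ω) * (Z q.1 q.2 * Y q.1 q.2 ω)
          = (Z p.1 p.2 * Z q.1 q.2) * (Y p.1 p.2 ω * Y q.1 q.2 ω) := fun ω => by ring
      simp_rw [h]
      rw [integral_const_mul, hcov]
    rw [step1]
    simp_rw [step2]
    simp only [Fintype.sum_prod_type]
    -- pure finite sum arithmetic
    have hZsq : ∀ i j, Z i j * Z i j = Z i j := by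
      intro i j; rcases hZ01 i j with h | h <;> simp [h]
    have hNiZ : ∀ i, (∑ j, Z i j) = Ni i := by intro i; rw [hNi]
    have hNjZ : ∀ j, (∑ i, Z i j) = Nj j := by intro j; rw [hNj]
    have e1 : (∑ i, ∑ j, ∑ i', ∑ j', Z i j * Z i' j' * m ^ 2) = m ^ 2 * N ^ 2 := by
      have h1 : ∀ (i : Fin R) (j : Fin C), (∑ i', ∑ j', Z i j * Z i' j' * m ^ 2)
          = Z i j * (m ^ 2 * N) := by
        intro i j
        have h2 : ∀ i' j', Z i j * Z i' j' * m ^ 2 = (Z i j * m ^ 2) * Z i' j' :=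
          fun i' j' => by ring
        simp_rw [h2, ← Finset.mul_sum]
        rw [← hN]; ring
      simp_rw [h1]
      simp only [← Finset.sum_mul]
      rw [← hN]; ring
    have e2 : (∑ i, ∑ j, ∑ i', ∑ j', Z i j * Z i' j' * (if i = i' then σA2 else 0))
        = σA2 * (∑ i, Ni i ^ 2) := by
      have h1 : ∀ (i : Fin R) (j : Fin C),
          (∑ i', ∑ j', Z i j * Z i' j' * (if i = i' then σA2 else 0))
          = Z i j * (Ni i * σA2) := by
        intro i j
        rw [Finset.sum_comm]
        have h2 : ∀ j' : Fin C, (∑ i', Z i j * Z i' j' * (if i = i' then σA2 else 0))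
            = Z i j * Z i j' * σA2 := by
          intro j'
          calc (∑ i', Z i j * Z i' j' * (if i = i' then σA2 else 0))
              = ∑ i', if i = i' then Z i j * Z i' j' * σA2 else 0 :=
                Finset.sum_congr rfl fun i' _ => by by_cases h : i = i' <;> simp [h]
            _ = Z i j * Z i j' * σA2 := by rw [Finset.sum_ite_eq]; simp
        simp_rw [h2]
        have h3 : ∀ j' : Fin C, Z i j * Z i j' * σA2 = (Z i j * σA2) * Z i j' :=
          fun j' => by ring
        simp_rw [h3, ← Finset.mul_sum, hNiZ]
        ring
      simp_rw [h1]
      have h4 : ∀ i : Fin R, (∑ j, Z i j * (Ni i * σA2)) = Ni i ^ 2 * σA2 := by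
        intro i
        rw [← Finset.sum_mul, hNiZ]; ring
      simp_rw [h4]
      rw [← Finset.sum_mul]; ring
    have e3 : (∑ i, ∑ j, ∑ i', ∑ j', Z i j * Z i' j' * (if j = j' then σB2 else 0))
        = σB2 * (∑ j, Nj j ^ 2) := by
      have h1 : ∀ (i : Fin R) (j : Fin C),
          (∑ i', ∑ j', Z i j * Z i' j' * (if j = j' then σB2 else 0))
          = Z i j * (Nj j * σB2) := by
        intro i j
        have h2 : ∀ i' : Fin R, (∑ j', Z i j * Z i' j' * (if j = j' then σB2 else 0))
            = Z i j * Z i' j * σB2 := by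
          intro i'
          calc (∑ j', Z i j * Z i' j' * (if j = j' then σB2 else 0))
              = ∑ j', if j = j' then Z i j * Z i' j' * σB2 else 0 :=
                Finset.sum_congr rfl fun j' _ => by by_cases h : j = j' <;> simp [h]
            _ = Z i j * Z i' j * σB2 := by rw [Finset.sum_ite_eq]; simp
        simp_rw [h2]
        have h3 : ∀ i' : Fin R, Z i j * Z i' j * σB2 = (Z i j * σB2) * Z i' j :=
          fun i' => by ring
        simp_rw [h3, ← Finset.mul_sum, hNjZ]
        ring
      simp_rw [h1]
      rw [Finset.sum_comm]
      have h4 : ∀ j : Fin C, (∑ i, Z i j * (Nj j * σB2)) = Nj j ^ 2 * σB2 := by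
        intro j
        rw [← Finset.sum_mul, hNjZ]; ring
      simp_rw [h4]
      rw [← Finset.sum_mul]; ring
    have e4 : (∑ i, ∑ j, ∑ i', ∑ j', Z i j * Z i' j' * (if i = i' ∧ j = j' then σE2 else 0))
        = σE2 * N := by
      have h1 : ∀ (i : Fin R) (j : Fin C),
          (∑ i', ∑ j', Z i j * Z i' j' * (if i = i' ∧ j = j' then σE2 else 0))
          = Z i j * σE2 := by
        intro i j
        have h2 : ∀ i' : Fin R, (∑ j', Z i j * Z i' j' * (if i = i' ∧ j = j' then σE2 else 0))
            = if i = i' then Z i j * Z i' j * σE2 else 0 := by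
          intro i'
          calc (∑ j', Z i j * Z i' j' * (if i = i' ∧ j = j' then σE2 else 0))
              = ∑ j', if j = j' then (if i = i' then Z i j * Z i' j' * σE2 else 0) else 0 := by
                refine Finset.sum_congr rfl fun j' _ => ?_
                by_cases h : i = i' <;> by_cases h' : j = j' <;> simp [h, h']
            _ = if i = i' then Z i j * Z i' j * σE2 else 0 := by rw [Finset.sum_ite_eq]; simp
        simp_rw [h2]
        rw [Finset.sum_ite_eq]
        simp [hZsq]
      simp_rw [h1]
      simp only [← Finset.sum_mul]
      rw [← hN]; ring
    calc (∑ i, ∑ j, ∑ i', ∑ j', Z i j * Z i' j' * (m ^ 2 + (if i = i' then σA2 else 0)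
          + (if j = j' then σB2 else 0) + (if i = i' ∧ j = j' then σE2 else 0)))
        = (∑ i, ∑ j, ∑ i', ∑ j', Z i j * Z i' j' * m ^ 2)
          + (∑ i, ∑ j, ∑ i', ∑ j', Z i j * Z i' j' * (if i = i' then σA2 else 0))
          + (∑ i, ∑ j, ∑ i', ∑ j', Z i j * Z i' j' * (if j = j' then σB2 else 0))
          + (∑ i, ∑ j, ∑ i', ∑ j', Z i j * Z i' j' * (if i = i' ∧ j = j' then σE2 else 0)) := by
          simp only [mul_add, Finset.sum_add_distrib]
      _ = m ^ 2 * N ^ 2 + σA2 * (∑ i, Ni i ^ 2) + σB2 * (∑ j, Nj j ^ 2) + σE2 * N := by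
          rw [e1, e2, e3, e4]
  -- final assembly
  have hfinal : ∫ ω, UE ω ∂μ = N * (∫ ω, A ω ∂μ) - ∫ ω, S ω ^ 2 ∂μ := by
    simp_rw [hUE2]
    rw [integral_sub (hIntA.const_mul N) hIntS2, integral_const_mul]
  rw [hfinal, hIA, hIS2]
  ring
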